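/- Let R be the free commutative nilpotent ring of nilpotency class 3 and characteristic 2 on generators X_0, X_1, .... Define the group homomorphism h : (R,+) → Z/2Z sending Σ a_i X_i + Σ_{j ≤ i} a_{ji} X_j X_i to Σ_i a_{2i+1} + Σ_{j ≥ 0} Σ_{i ∈ 2^j·ℕ_{>0}} a_{ji}, and let H = ker h, an index-2 subgroup of (R,+). Then H does not contain any ideal of R of finite index; consequently, since R·H·R = {0} by 3-nilpotency, H + R·H·R = H contains no finite index ideal. -/

import Mathlib

/-- A concrete model of the free commutative nilpotent ring of class 3 and
characteristic 2 on generators X₀, X₁, …: elements are pairs (linear part,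
quadratic part), where the linear part is a finitely supported ZMod 2-vector
indexed by ℕ (coefficients of the Xᵢ) and the quadratic part is indexed by
pairs j ≤ i (coefficients of the XⱼXᵢ). -/
abbrev NilRing : Type :=
  (ℕ →₀ ZMod 2) × ({p : ℕ × ℕ // p.1 ≤ p.2} →₀ ZMod 2)

/-- The quadratic part of the product of two linear parts. -/
noncomputable def nilQuad (a a' : ℕ →₀ ZMod 2) :
    {p : ℕ × ℕ // p.1 ≤ p.2} →₀ ZMod 2 :=
  a.sum fun i c => a'.sum fun j c' =>
    Finsupp.single ⟨(min i j, max i j), min_le_max⟩ (c * c')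

/-- Multiplication in the free class-3 nilpotent ring: products of quadratic
parts vanish, products of linear parts land in the quadratic part. -/
noncomputable instance : Mul NilRing := ⟨fun x y => (0, nilQuad x.1 y.1)⟩

/-- The functional h: the mod-2 sum of the coefficients a_{2i+1} of the
odd-indexed linear monomials plus all coefficients a_{ji} of quadratic
monomials XⱼXᵢ with i a positive multiple of 2^j. -/
noncomputable def nilH (x : NilRing) : ZMod 2 :=
  x.1.sum (fun i c => if i % 2 = 1 then c else 0) +
  x.2.sum (fun p c => if 0 < p.val.2 ∧ 2 ^ p.val.1 ∣ p.val.2 then c else 0)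

lemma nilQuad_zero_left (a : ℕ →₀ ZMod 2) : nilQuad 0 a = 0 := by
  simp [nilQuad]

noncomputable def nilHom : NilRing →+ ZMod 2 where
  toFun := nilH
  map_zero' := by simp [nilH]
  map_add' x y := by
    simp only [nilH, Prod.fst_add, Prod.snd_add]
    rw [Finsupp.sum_add_index' (by intro p; simp) (by intro p c1 c2; split <;> simp),
        Finsupp.sum_add_index' (by intro p; simp) (by intro p c1 c2; split <;> simp)]
    abel

lemma nilQuad_single_single (i j : ℕ) (c c' : ZMod 2) :
    nilQuad (Finsupp.single i c) (Finsupp.single j c') =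
      Finsupp.single ⟨(min i j, max i j), min_le_max⟩ (c * c') := by
  unfold nilQuad
  rw [Finsupp.sum_single_index (by simp), Finsupp.sum_single_index (by simp)]

lemma nilQuad_add_right (a b b' : ℕ →₀ ZMod 2) :
    nilQuad a (b + b') = nilQuad a b + nilQuad a b' := by
  unfold nilQuad
  rw [← Finsupp.sum_add]
  apply Finsupp.sum_congr
  intro i _
  rw [Finsupp.sum_add_index' (by intro p; simp) (by intro p c1 c2; rw [mul_add, Finsupp.single_add])]

lemma nilH_pair (p q : {p : ℕ × ℕ // p.1 ≤ p.2}) (hpq : p ≠ q) :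
    nilH (0, Finsupp.single p 1 + Finsupp.single q 1) =
      (if 0 < p.val.2 ∧ 2 ^ p.val.1 ∣ p.val.2 then (1 : ZMod 2) else 0) +
      (if 0 < q.val.2 ∧ 2 ^ q.val.1 ∣ q.val.2 then (1 : ZMod 2) else 0) := by
  unfold nilH
  rw [Finsupp.sum_add_index' (by intro r; simp) (by intro r c1 c2; split <;> simp)]
  rw [Finsupp.sum_single_index (by simp), Finsupp.sum_single_index (by simp)]
  simp

lemma neg_one_zmod2 : (-1 : ZMod 2) = 1 := by decide

lemma nilHom_surj : Function.Surjective nilHom := by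
  intro z
  fin_cases z
  · exact ⟨0, map_zero _⟩
  · refine ⟨(Finsupp.single 1 1, 0), ?_⟩
    show nilH _ = _
    unfold nilH
    rw [Finsupp.sum_single_index (by simp)]
    simp
    rfl

lemma key (I : AddSubgroup NilRing)
    (hmul : ∀ r x : NilRing, x ∈ I → r * x ∈ I ∧ x * r ∈ I)
    (hsub : ∀ x ∈ I, nilH x = 0) (u v : ℕ) (huv : u < v)
    (hd : (((Finsupp.single u 1 + Finsupp.single v 1 : ℕ →₀ ZMod 2), (0 : {p : ℕ × ℕ // p.1 ≤ p.2} →₀ ZMod 2)) : NilRing) ∈ I) :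
    False := by
  set c : ℕ := 2 ^ u * (2 * v + 1) with hc
  have hcpos : 0 < c := by positivity
  have hvc : v < c := by
    have h1 : 1 ≤ 2 ^ u := Nat.one_le_two_pow
    calc v < 2 * v + 1 := by omega
    _ ≤ c := by rw [hc]; nlinarith
  have hucle : u ≤ c := by omega
  have hvcle : v ≤ c := le_of_lt hvc
  have hdvd : 2 ^ u ∣ c := dvd_mul_right _ _
  have hnd : ¬ 2 ^ v ∣ c := by
    intro h
    have h2 : 2 ^ (u + 1) ∣ 2 ^ u * (2 * v + 1) :=
      dvd_trans (pow_dvd_pow 2 (by omega)) h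
    rw [pow_succ] at h2
    have := (mul_dvd_mul_iff_left (pow_ne_zero u (two_ne_zero))).mp h2
    omega
  set r : NilRing := (Finsupp.single c 1, 0) with hr
  set d : NilRing := ((Finsupp.single u 1 + Finsupp.single v 1 : ℕ →₀ ZMod 2), 0) with hdd
  have hmem : r * d ∈ I := (hmul r d hd).1
  have h0 : nilH (r * d) = 0 := hsub _ hmem
  have hprod : r * d = (0, Finsupp.single ⟨(u, c), hucle⟩ 1 + Finsupp.single ⟨(v, c), hvcle⟩ 1) := by
    show ((0, nilQuad r.1 d.1) : NilRing) = _
    rw [hr, hdd]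
    simp only [nilQuad_add_right, nilQuad_single_single, one_mul]
    have e1 : (⟨(min c u, max c u), min_le_max⟩ : {p : ℕ × ℕ // p.1 ≤ p.2}) = ⟨(u, c), hucle⟩ :=
      Subtype.ext (by simp [Prod.ext_iff, min_eq_right hucle, max_eq_left hucle])
    have e2 : (⟨(min c v, max c v), min_le_max⟩ : {p : ℕ × ℕ // p.1 ≤ p.2}) = ⟨(v, c), hvcle⟩ :=
      Subtype.ext (by simp [Prod.ext_iff, min_eq_right hvcle, max_eq_left hvcle])
    rw [e1, e2]
  rw [hprod, nilH_pair _ _ (by intro h; simp at h; omega)] at h0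
  rw [if_pos ⟨hcpos, hdvd⟩, if_neg (by rintro ⟨-, h⟩; exact hnd h)] at h0
  simp at h0

/-- In the free commutative nilpotent ring of class 3 and characteristic 2 on
X₀, X₁, …, all triple products vanish, and the kernel H of the functional h is
an index-2 additive subgroup which contains no (two-sided) ideal of finite
index; consequently H + R·H·R = H contains no finite index ideal. -/
theorem stmt_19 :
    (∀ x y z : NilRing, x * y * z = 0) ∧
    ∃ Hgrp : AddSubgroup NilRing,
      (Hgrp : Set NilRing) = {x : NilRing | nilH x = 0} ∧
      Hgrp.index = 2 ∧
      ¬ ∃ I : AddSubgroup NilRing,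
          (∀ r x : NilRing, x ∈ I → r * x ∈ I ∧ x * r ∈ I) ∧
          I.FiniteIndex ∧
          (I : Set NilRing) ⊆ (Hgrp : Set NilRing) := by
  refine ⟨?_, nilHom.ker, ?_, ?_, ?_⟩
  · intro x y z
    show ((0, nilQuad (x * y).1 z.1) : NilRing) = 0
    rw [show (x * y).1 = 0 from rfl, nilQuad_zero_left]
    rfl
  · ext x
    exact AddMonoidHom.mem_ker
  · rw [AddSubgroup.index_ker, AddMonoidHom.range_eq_top.mpr nilHom_surj]
    rw [Nat.card_congr AddSubgroup.topEquiv.toEquiv]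
    simp [Nat.card_eq_fintype_card]
  · rintro ⟨I, hmul, hfin, hsub⟩
    have hsub' : ∀ x ∈ I, nilH x = 0 := fun x hx => hsub hx
    have hfinq : Finite (NilRing ⧸ I) := Nat.finite_of_card_ne_zero hfin.index_ne_zero
    obtain ⟨a, b, hab, heq⟩ := Finite.exists_ne_map_eq_of_infinite
      (fun n : ℕ => (QuotientAddGroup.mk ((Finsupp.single n 1, 0) : NilRing) : NilRing ⧸ I))
    have hd : -((Finsupp.single a 1, 0) : NilRing) + (Finsupp.single b 1, 0) ∈ I :=
      (QuotientAddGroup.eq).mp heq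
    have hlin : -((Finsupp.single a 1, 0) : NilRing) + (Finsupp.single b 1, 0) =
        ((Finsupp.single a 1 + Finsupp.single b 1 : ℕ →₀ ZMod 2), 0) := by
      refine Prod.ext ?_ (by simp)
      show -(Finsupp.single a 1) + Finsupp.single b 1 = _
      rw [← Finsupp.single_neg, neg_one_zmod2]
    rw [hlin] at hd
    rcases lt_or_gt_of_ne hab with h | h
    · exact key I hmul hsub' a b h hd
    · rw [add_comm] at hd
      exact key I hmul hsub' b a h hd
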